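/- Let λ > 0, n a positive integer, and α ∈ (n−1, n). Let u : ℝ → ℂ be n-times continuously differentiable with u^{(j)} ∈ L¹(ℝ) for 0 ≤ j ≤ n and u^{(j)}(x) → 0 as |x| → ∞ for 0 ≤ j < n. Set G(x) = (1/Γ(n−α)) ∫_{−∞}^{x} (x−ξ)^{n−α−1} e^{λξ} u(ξ) dξ, assume G is n-times differentiable and that the left tempered fractional derivative (D_−^{α,λ}u)(x) = e^{−λx} G^{(n)}(x) belongs to L¹(ℝ). Then for every ω ∈ ℝ, F(D_−^{α,λ}u)(ω) = (λ + iω)^{α} û(ω). -/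

import Mathlib

open MeasureTheory Filter

/-- Fourier transform with convention `û(ω) = ∫ e^{-iωx} u(x) dx`. -/
noncomputable def fourierT (u : ℝ → ℂ) (ω : ℝ) : ℂ :=
  ∫ x : ℝ, Complex.exp (-(Complex.I * ω * x)) * u x

/-- The fractional integral `G(x) = (1/Γ(n-α)) ∫_{-∞}^x (x-ξ)^{n-α-1} e^{λξ} u(ξ) dξ`. -/
noncomputable def leftFracG (lam : ℝ) (n : ℕ) (α : ℝ) (u : ℝ → ℂ) (x : ℝ) : ℂ :=
  (1 / Real.Gamma ((n : ℝ) - α) : ℝ) •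
    ∫ ξ in Set.Iio x, ((x - ξ) ^ ((n : ℝ) - α - 1) * Real.exp (lam * ξ) : ℝ) • u ξ

/-- Left Riemann–Liouville tempered fractional derivative
`(D_-^{α,λ}u)(x) = e^{-λx} G^{(n)}(x)`. -/
noncomputable def leftTD (lam : ℝ) (n : ℕ) (α : ℝ) (u : ℝ → ℂ) (x : ℝ) : ℂ :=
  (Real.exp (-(lam * x)) : ℝ) • iteratedDeriv n (leftFracG lam n α u) x

namespace TFDaux

open Complex Set

/-! ### Elementary facts about the Fourier kernel -/

lemma expChar_norm (ω x : ℝ) : ‖Complex.exp (-(Complex.I * ω * x))‖ = 1 := by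
  rw [Complex.norm_exp]
  simp

lemma expChar_continuous (ω : ℝ) :
    Continuous (fun x : ℝ => Complex.exp (-(Complex.I * ω * x))) :=
  ((continuous_const.mul Complex.continuous_ofReal).neg).cexp

lemma char_mul_integrable {f : ℝ → ℂ} (hf : Integrable f) (ω : ℝ) :
    Integrable (fun x : ℝ => Complex.exp (-(Complex.I * ω * x)) * f x) :=
  hf.bdd_mul (expChar_continuous ω).aestronglyMeasurable
    (ae_of_all _ fun x => le_of_eq (expChar_norm ω x))

lemma fourierT_add {f g : ℝ → ℂ} (hf : Integrable f) (hg : Integrable g) (ω : ℝ) :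
    fourierT (fun x => f x + g x) ω = fourierT f ω + fourierT g ω := by
  unfold fourierT
  simp_rw [mul_add]
  exact integral_add (char_mul_integrable hf ω) (char_mul_integrable hg ω)

lemma fourierT_const_mul (c : ℂ) (f : ℝ → ℂ) (ω : ℝ) :
    fourierT (fun x => c * f x) ω = c * fourierT f ω := by
  unfold fourierT
  rw [← integral_const_mul]
  congr 1; funext x; ring

lemma fourierT_eq_fourierIntegral (f : ℝ → ℂ) (ω : ℝ) :
    fourierT f ω = FourierTransform.fourier f (ω / (2 * Real.pi)) := by
  rw [Real.fourier_real_eq_integral_exp_smul]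
  unfold fourierT
  congr 1; funext x
  rw [smul_eq_mul]
  congr 2
  have harg : -2 * Real.pi * x * (ω / (2 * Real.pi)) = -(ω * x) := by
    field_simp
  rw [harg]
  push_cast
  ring

lemma fourierT_deriv {f : ℝ → ℂ} (hf : Integrable f) (h'f : Differentiable ℝ f)
    (hf' : Integrable (deriv f)) (ω : ℝ) :
    fourierT (deriv f) ω = (Complex.I * ω) * fourierT f ω := by
  rw [fourierT_eq_fourierIntegral, fourierT_eq_fourierIntegral,
    Real.fourier_deriv hf h'f hf']
  simp only [smul_eq_mul]
  have hπ : (Real.pi : ℂ) ≠ 0 := by exact_mod_cast Real.pi_ne_zero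
  congr 1
  push_cast
  field_simp

/-! ### The kernel `k` -/

noncomputable def kfun (lam β : ℝ) : ℝ → ℂ :=
  Set.indicator (Set.Ioi (0 : ℝ))
    (fun s => ((s ^ (β - 1) * Real.exp (-(lam * s)) / Real.Gamma β : ℝ) : ℂ))

lemma rpow_exp_integrableOn {β c : ℝ} (hβ : 0 < β) (hc : 0 < c) :
    IntegrableOn (fun t : ℝ => t ^ (β - 1) * Real.exp (-(c * t))) (Set.Ioi 0) := by
  have h0 := Real.GammaIntegral_convergent hβ
  have h1 : IntegrableOn (fun x : ℝ => Real.exp (-(c * x)) * (c * x) ^ (β - 1)) (Set.Ioi 0) := by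
    have h2 := integrableOn_Ioi_comp_mul_left_iff (fun x => Real.exp (-x) * x ^ (β - 1)) 0 hc
    rw [mul_zero] at h2
    exact h2.2 h0
  refine (h1.const_mul ((c ^ (β - 1))⁻¹)).congr ?_
  filter_upwards [ae_restrict_mem measurableSet_Ioi] with t ht
  have ht' : (0 : ℝ) < t := ht
  have hcp : (0 : ℝ) < c ^ (β - 1) := Real.rpow_pos_of_pos hc _
  rw [Real.mul_rpow hc.le ht'.le]
  field_simp

lemma ofReal_integrable {f : ℝ → ℝ} {s : Set ℝ} (hf : IntegrableOn f s) :
    IntegrableOn (fun x => ((f x : ℝ) : ℂ)) s := by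
  rw [IntegrableOn, ← integrable_norm_iff]
  · simpa using hf.norm
  · exact Complex.continuous_ofReal.comp_aestronglyMeasurable hf.aestronglyMeasurable

lemma kfun_integrable {lam β : ℝ} (hβ : 0 < β) (hlam : 0 < lam) :
    Integrable (kfun lam β) := by
  rw [kfun, integrable_indicator_iff measurableSet_Ioi]
  exact ofReal_integrable ((rpow_exp_integrableOn hβ hlam).div_const _)

/-! ### The Laplace transform of `t^{β-1}` -/

lemma laplace_integrableOn {β : ℝ} (hβ : 0 < β) {z : ℂ} (hz : 0 < z.re) :
    IntegrableOn (fun t : ℝ => ((t ^ (β - 1) : ℝ) : ℂ) * Complex.exp (-(z * t)))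
      (Set.Ioi 0) := by
  have hmeas : AEStronglyMeasurable
      (fun t : ℝ => ((t ^ (β - 1) : ℝ) : ℂ) * Complex.exp (-(z * t)))
      (volume.restrict (Set.Ioi 0)) := by
    apply ContinuousOn.aestronglyMeasurable _ measurableSet_Ioi
    apply ContinuousOn.mul
    · exact Complex.continuous_ofReal.comp_continuousOn
        (continuousOn_id.rpow_const (fun t ht => Or.inl (ne_of_gt ht)))
    · exact (Complex.continuous_exp.comp
        ((continuous_const.mul Complex.continuous_ofReal).neg)).continuousOn
  refine Integrable.mono' (rpow_exp_integrableOn hβ hz) hmeas ?_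
  rw [ae_restrict_iff' measurableSet_Ioi]
  refine Eventually.of_forall (fun t ht => ?_)
  have ht' : (0 : ℝ) < t := ht
  refine le_of_eq ?_
  rw [norm_mul, Complex.norm_real, Real.norm_eq_abs,
    _root_.abs_of_nonneg (Real.rpow_nonneg ht'.le _), Complex.norm_exp]
  have hre : (-(z * (t : ℂ))).re = -(z.re * t) := by simp
  rw [hre]

lemma laplace_eq {β : ℝ} (hβ : 0 < β) {z : ℂ} (hz : 0 < z.re) :
    ∫ t in Set.Ioi (0 : ℝ), ((t ^ (β - 1) : ℝ) : ℂ) * Complex.exp (-(z * t))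
      = (Real.Gamma β : ℂ) * z ^ (-(β : ℂ)) := by
  set U : Set ℂ := {w : ℂ | 0 < w.re} with hU
  have hUo : IsOpen U := isOpen_lt continuous_const Complex.continuous_re
  set Φ : ℂ → ℂ :=
    fun w => ∫ t in Set.Ioi (0 : ℝ), ((t ^ (β - 1) : ℝ) : ℂ) * Complex.exp (-(w * t)) with hΦdef
  set Ψ : ℂ → ℂ := fun w => (Real.Gamma β : ℂ) * w ^ (-(β : ℂ)) with hΨdef
  have hmeasF : ∀ w : ℂ, AEStronglyMeasurable
      (fun t : ℝ => ((t ^ (β - 1) : ℝ) : ℂ) * Complex.exp (-(w * t)))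
      (volume.restrict (Set.Ioi 0)) := by
    intro w
    apply ContinuousOn.aestronglyMeasurable _ measurableSet_Ioi
    apply ContinuousOn.mul
    · exact Complex.continuous_ofReal.comp_continuousOn
        (continuousOn_id.rpow_const (fun t ht => Or.inl (ne_of_gt ht)))
    · exact (Complex.continuous_exp.comp
        ((continuous_const.mul Complex.continuous_ofReal).neg)).continuousOn
  have hΦdiff : ∀ w ∈ U, DifferentiableAt ℂ Φ w := by
    intro w hw
    have hwre : 0 < w.re := hw
    have hε : 0 < w.re / 2 := by linarith
    have key := hasDerivAt_integral_of_dominated_loc_of_deriv_le (μ := volume.restrict (Set.Ioi 0))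
      (F := fun (z' : ℂ) (t : ℝ) => ((t ^ (β - 1) : ℝ) : ℂ) * Complex.exp (-(z' * t)))
      (F' := fun (z' : ℂ) (t : ℝ) =>
        ((t ^ (β - 1) : ℝ) : ℂ) * (Complex.exp (-(z' * t)) * (-(t : ℂ))))
      (x₀ := w)
      (bound := fun t : ℝ => t ^ (β - 1) * (t * Real.exp (-(w.re / 2 * t))))
      (Metric.ball_mem_nhds w hε) (Eventually.of_forall (fun z' => hmeasF z')) (laplace_integrableOn hβ hwre)
      ?_ ?_ ?_ ?_
    · exact key.2.differentiableAt
    · -- measurability of F' x₀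
      apply ContinuousOn.aestronglyMeasurable _ measurableSet_Ioi
      apply ContinuousOn.mul
      · exact Complex.continuous_ofReal.comp_continuousOn
          (continuousOn_id.rpow_const (fun t ht => Or.inl (ne_of_gt ht)))
      · exact ((Complex.continuous_exp.comp
          ((continuous_const.mul Complex.continuous_ofReal).neg)).mul
            (Complex.continuous_ofReal.neg)).continuousOn
    · -- bound
      rw [ae_restrict_iff' measurableSet_Ioi]
      refine Eventually.of_forall (fun t ht => ?_)
      intro z' hz'
      have ht' : (0 : ℝ) < t := ht
      have hre : w.re / 2 ≤ z'.re := by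
        have h1 : |(z' - w).re| ≤ ‖z' - w‖ := Complex.abs_re_le_norm _
        have h2 : ‖z' - w‖ < w.re / 2 := by
          rw [← Complex.dist_eq]; exact Metric.mem_ball.mp hz'
        have h3 : |z'.re - w.re| < w.re / 2 := by
          simpa using lt_of_le_of_lt h1 h2
        have := abs_lt.mp h3
        linarith [this.1]
      rw [norm_mul, norm_mul, Complex.norm_real, Real.norm_eq_abs,
        _root_.abs_of_nonneg (Real.rpow_nonneg ht'.le _), Complex.norm_exp,
        norm_neg, Complex.norm_real, Real.norm_eq_abs, _root_.abs_of_nonneg ht'.le]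
      have hexp : Real.exp ((-(z' * t)).re) ≤ Real.exp (-(w.re / 2 * t)) := by
        apply Real.exp_le_exp.2
        have : (-(z' * t)).re = -(z'.re * t) := by simp
        rw [this]
        have : w.re / 2 * t ≤ z'.re * t := mul_le_mul_of_nonneg_right hre ht'.le
        linarith
      calc t ^ (β - 1) * (Real.exp ((-(z' * t)).re) * t)
          ≤ t ^ (β - 1) * (Real.exp (-(w.re / 2 * t)) * t) := by
            apply mul_le_mul_of_nonneg_left _ (Real.rpow_nonneg ht'.le _)
            exact mul_le_mul_of_nonneg_right hexp ht'.le
        _ = t ^ (β - 1) * (t * Real.exp (-(w.re / 2 * t))) := by ring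
    · -- integrability of bound
      have h := rpow_exp_integrableOn (by linarith : (0:ℝ) < β + 1) hε
      refine h.congr_fun (fun t ht => ?_) measurableSet_Ioi
      have ht' : (0 : ℝ) < t := ht
      dsimp only
      rw [show β + 1 - 1 = (β - 1) + 1 by ring, Real.rpow_add_one (ne_of_gt ht')]
      ring
    · -- differentiability
      rw [ae_restrict_iff' measurableSet_Ioi]
      refine Eventually.of_forall (fun t ht => ?_)
      intro z' _
      have h1 : HasDerivAt (fun y : ℂ => -(y * (t : ℂ))) (-(t : ℂ)) z' := by
        simpa using ((hasDerivAt_id z').mul_const (t : ℂ)).fun_neg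
      exact (h1.cexp).const_mul _
  have hΨdiff : ∀ w ∈ U, DifferentiableAt ℂ Ψ w := by
    intro w hw
    exact (((hasDerivAt_id w).cpow_const (Or.inl hw)).differentiableAt).const_mul _
  have hΦd : DifferentiableOn ℂ Φ U := fun w hw => (hΦdiff w hw).differentiableWithinAt
  have hΨd : DifferentiableOn ℂ Ψ U := fun w hw => (hΨdiff w hw).differentiableWithinAt
  have hΦa : AnalyticOnNhd ℂ Φ U := hΦd.analyticOnNhd hUo
  have hΨa : AnalyticOnNhd ℂ Ψ U := hΨd.analyticOnNhd hUo
  have hpre : IsPreconnected U := (convex_halfSpace_re_gt 0).isPreconnected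
  have h1U : (1 : ℂ) ∈ U := by simp [hU]
  have hreal : ∀ r : ℝ, 0 < r → Φ (r : ℂ) = Ψ (r : ℂ) := by
    intro r hr
    have hptw : ∀ t ∈ Set.Ioi (0:ℝ),
        ((t ^ (β - 1) : ℝ) : ℂ) * Complex.exp (-((r : ℂ) * t))
          = ((t ^ (β - 1) * Real.exp (-(r * t)) : ℝ) : ℂ) := by
      intro t _
      rw [show -((r : ℂ) * (t : ℂ)) = ((-(r * t) : ℝ) : ℂ) by push_cast; ring,
        ← Complex.ofReal_exp]
      push_cast
      ring
    have h2 : ((r : ℂ)) ^ (-(β : ℂ)) = ((r ^ (-β) : ℝ) : ℂ) := by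
      rw [Complex.ofReal_cpow hr.le, Complex.ofReal_neg]
    calc Φ (r : ℂ)
        = ∫ t in Set.Ioi (0:ℝ), ((t ^ (β - 1) * Real.exp (-(r * t)) : ℝ) : ℂ) := by
          simp only [hΦdef]
          exact setIntegral_congr_fun measurableSet_Ioi hptw
      _ = ((∫ t in Set.Ioi (0:ℝ), t ^ (β - 1) * Real.exp (-(r * t)) : ℝ) : ℂ) :=
          integral_ofReal
      _ = (((1 / r) ^ β * Real.Gamma β : ℝ) : ℂ) := by
          rw [Real.integral_rpow_mul_exp_neg_mul_Ioi hβ hr]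
      _ = Ψ (r : ℂ) := by
          simp only [hΨdef]
          rw [h2, ← Complex.ofReal_mul]
          congr 1
          rw [Real.rpow_neg hr.le, ← Real.inv_rpow hr.le, one_div]
          ring
  have hfreq : ∃ᶠ z' in nhdsWithin (1 : ℂ) {(1:ℂ)}ᶜ, Φ z' = Ψ z' := by
    have htend : Tendsto (fun m : ℕ => ((1 + ((m : ℝ) + 1)⁻¹ : ℝ) : ℂ)) atTop
        (nhdsWithin (1 : ℂ) {(1:ℂ)}ᶜ) := by
      apply tendsto_nhdsWithin_of_tendsto_nhds_of_eventually_within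
      · have h1 := tendsto_one_div_add_atTop_nhds_zero_nat (𝕜 := ℝ)
        simp only [one_div] at h1
        have h0 : Tendsto (fun m : ℕ => (1 + ((m : ℝ) + 1)⁻¹ : ℝ)) atTop (nhds 1) := by
          simpa using tendsto_const_nhds (x := (1:ℝ)) (f := atTop (α := ℕ)) |>.add h1
        have h2 : Tendsto (fun m : ℕ => ((1 + ((m : ℝ) + 1)⁻¹ : ℝ) : ℂ)) atTop
            (nhds ((1:ℝ):ℂ)) := (Complex.continuous_ofReal.tendsto (1:ℝ)).comp h0
        rw [Complex.ofReal_one] at h2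
        exact h2
      · refine Eventually.of_forall (fun m => ?_)
        simp only [mem_compl_iff, mem_singleton_iff]
        intro h
        have h' : (1 + ((m : ℝ) + 1)⁻¹ : ℝ) = 1 := by exact_mod_cast h
        have hpos : (0:ℝ) < ((m : ℝ) + 1)⁻¹ := by positivity
        linarith
    exact htend.frequently (Frequently.of_forall (fun m => hreal _ (by positivity)))
  have := hΦa.eqOn_of_preconnected_of_frequently_eq hΨa hpre h1U hfreq
  exact this hz

lemma fourier_kfun {lam β : ℝ} (hlam : 0 < lam) (hβ : 0 < β) (ω : ℝ) :
    ∫ s : ℝ, Complex.exp (-(Complex.I * ω * s)) * kfun lam β s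
      = ((lam : ℂ) + Complex.I * ω) ^ (-(β : ℂ)) := by
  set z : ℂ := (lam : ℂ) + Complex.I * ω with hz
  have hzre : 0 < z.re := by
    simp [hz, Complex.add_re, Complex.mul_re]
    exact hlam
  have hΓ : (Real.Gamma β : ℂ) ≠ 0 := by
    exact_mod_cast (Real.Gamma_pos_of_pos hβ).ne'
  have hrw : (fun s : ℝ => Complex.exp (-(Complex.I * ω * s)) * kfun lam β s)
      = Set.indicator (Set.Ioi (0:ℝ))
        (fun s => (Real.Gamma β : ℂ)⁻¹ * (((s ^ (β - 1) : ℝ) : ℂ) * Complex.exp (-(z * s)))) := by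
    funext s
    by_cases hs : s ∈ Set.Ioi (0:ℝ)
    · rw [kfun, Set.indicator_of_mem hs, Set.indicator_of_mem hs]
      rw [show -(z * (s:ℂ)) = ((-(lam * s) : ℝ) : ℂ) + -(Complex.I * ω * s) by push_cast; ring,
        Complex.exp_add, ← Complex.ofReal_exp]
      push_cast
      ring
    · rw [kfun, Set.indicator_of_notMem hs, Set.indicator_of_notMem hs, mul_zero]
  rw [hrw, integral_indicator measurableSet_Ioi, integral_const_mul, laplace_eq hβ hzre]
  field_simp

/-! ### `G` as a convolution -/

lemma G_eq_conv (lam α : ℝ) (n : ℕ) (u : ℝ → ℂ) (x : ℝ) :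
    leftFracG lam n α u x
      = (Real.exp (lam * x) : ℂ) * ∫ s : ℝ, kfun lam ((n:ℝ) - α) s * u (x - s) := by
  set β := (n:ℝ) - α with hβ
  set F : ℝ → ℂ :=
    Set.indicator (Set.Iio x) (fun ξ => ((x - ξ) ^ (β - 1) * Real.exp (lam * ξ) : ℝ) • u ξ) with hF
  have h1 : leftFracG lam n α u x = (1 / Real.Gamma β : ℝ) • ∫ ξ : ℝ, F ξ := by
    rw [leftFracG, hF, integral_indicator measurableSet_Iio]
  have h2 : ∫ ξ : ℝ, F ξ = ∫ s : ℝ, F (x - s) :=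
    (integral_sub_left_eq_self F volume x).symm
  have h3 : (fun s : ℝ => F (x - s))
      = Set.indicator (Set.Ioi (0:ℝ))
        (fun s => ((s ^ (β - 1) * Real.exp (lam * (x - s)) : ℝ)) • u (x - s)) := by
    funext s
    by_cases hs : s ∈ Set.Ioi (0:ℝ)
    · have hs' : 0 < s := hs
      have hmem : x - s ∈ Set.Iio x := by simp [hs']
      rw [hF, Set.indicator_of_mem hmem, Set.indicator_of_mem hs]
      simp
    · have hs' : ¬ 0 < s := hs
      have hnmem : x - s ∉ Set.Iio x := by simp at hs' ⊢; linarith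
      rw [hF, Set.indicator_of_notMem hnmem, Set.indicator_of_notMem hs]
  have h4 : (fun s : ℝ => kfun lam β s * u (x - s))
      = Set.indicator (Set.Ioi (0:ℝ))
        (fun s => ((s ^ (β - 1) * Real.exp (-(lam * s)) / Real.Gamma β : ℝ) : ℂ) * u (x - s)) := by
    funext s
    by_cases hs : s ∈ Set.Ioi (0:ℝ)
    · rw [kfun, Set.indicator_of_mem hs, Set.indicator_of_mem hs]
    · rw [kfun, Set.indicator_of_notMem hs, Set.indicator_of_notMem hs, zero_mul]
  rw [h1, h2, h3, h4, integral_indicator measurableSet_Ioi, integral_indicator measurableSet_Ioi,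
    ← integral_smul, ← integral_const_mul]
  refine setIntegral_congr_fun measurableSet_Ioi (fun s _ => ?_)
  rw [smul_smul, Complex.real_smul]
  rw [show lam * (x - s) = lam * x + -(lam * s) by ring, Real.exp_add]
  push_cast
  ring

/-! ### Derivative of a convolution -/

lemma conv_integrand_integrable {k h : ℝ → ℂ} (hk : Integrable k) (hh : Continuous h)
    {C : ℝ} (hb : ∀ y, ‖h y‖ ≤ C) (t : ℝ) :
    Integrable (fun s => k s * h (t - s)) := by
  have := hk.bdd_mul ((hh.comp (continuous_const.sub continuous_id)).aestronglyMeasurable)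
    (ae_of_all _ fun s => hb (t - s))
  simpa [mul_comm] using this

lemma conv_continuous {k h : ℝ → ℂ} (hk : Integrable k) (hh : Continuous h)
    {C : ℝ} (hb : ∀ y, ‖h y‖ ≤ C) :
    Continuous (fun y => ∫ s : ℝ, k s * h (y - s)) := by
  have hbdd : BddAbove (Set.range fun y => ‖h y‖) := by
    refine ⟨C, ?_⟩
    rintro r ⟨y, rfl⟩
    exact hb y
  exact hbdd.continuous_convolution_right_of_integrable (ContinuousLinearMap.mul ℂ ℂ) hk hh

lemma conv_prod_integrable {k h : ℝ → ℂ} (hk : Integrable k) (hh : Continuous h)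
    {C : ℝ} (hC : 0 ≤ C) (hb : ∀ y, ‖h y‖ ≤ C) (a y : ℝ) :
    Integrable (fun p : ℝ × ℝ => k p.2 * h (p.1 - p.2))
      ((volume.restrict (Set.Ioc a y)).prod volume) := by
  have hmeas : AEStronglyMeasurable (fun p : ℝ × ℝ => k p.2 * h (p.1 - p.2))
      ((volume.restrict (Set.Ioc a y)).prod volume) := by
    have h0 : AEStronglyMeasurable (fun p : ℝ × ℝ => k p.2 * h (p.1 - p.2))
        ((volume : Measure ℝ).prod volume) :=
      hk.aestronglyMeasurable.convolution_integrand (ContinuousLinearMap.mul ℂ ℂ)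
        hh.aestronglyMeasurable
    have heq : (volume.restrict (Set.Ioc a y)).prod (volume : Measure ℝ)
        = ((volume : Measure ℝ).prod volume).restrict ((Set.Ioc a y) ×ˢ Set.univ) := by
      rw [← Measure.prod_restrict, Measure.restrict_univ]
    rw [heq]
    exact h0.restrict
  rw [integrable_prod_iff hmeas]
  have hfin : IsFiniteMeasure (volume.restrict (Set.Ioc a y)) := by
    constructor
    simp [Real.volume_Ioc]
  constructor
  · exact Eventually.of_forall (fun t => conv_integrand_integrable hk hh hb t)
  · refine Integrable.mono' (integrable_const ((∫ s : ℝ, ‖k s‖) * C))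
      hmeas.norm.integral_prod_right' ?_
    refine Eventually.of_forall (fun t => ?_)
    have hint : Integrable (fun s => ‖k s * h (t - s)‖) :=
      (conv_integrand_integrable hk hh hb t).norm
    rw [Real.norm_eq_abs, _root_.abs_of_nonneg (integral_nonneg (fun s => norm_nonneg _))]
    show (∫ s : ℝ, ‖k s * h (t - s)‖) ≤ (∫ s : ℝ, ‖k s‖) * C
    calc ∫ s : ℝ, ‖k s * h (t - s)‖
        ≤ ∫ s : ℝ, ‖k s‖ * C := by
          refine integral_mono hint (hk.norm.mul_const C) (fun s => ?_)
          rw [norm_mul]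
          exact mul_le_mul_of_nonneg_left (hb (t - s)) (norm_nonneg _)
      _ = (∫ s : ℝ, ‖k s‖) * C := by rw [integral_mul_const]

lemma hasDerivAt_conv {k g g' : ℝ → ℂ} (hk : Integrable k)
    (hg : ∀ y, HasDerivAt g (g' y) y)
    (hgc : Continuous g) {Cg : ℝ} (hCg : 0 ≤ Cg) (hgb : ∀ y, ‖g y‖ ≤ Cg)
    (hg'c : Continuous g') {C : ℝ} (hC : 0 ≤ C) (hg'b : ∀ y, ‖g' y‖ ≤ C) (x : ℝ) :
    HasDerivAt (fun y => ∫ s : ℝ, k s * g (y - s)) (∫ s : ℝ, k s * g' (x - s)) x := by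
  set Gc : ℝ → ℂ := fun y => ∫ s : ℝ, k s * g' (y - s) with hGc
  have hGc_cont : Continuous Gc := conv_continuous hk hg'c hg'b
  set a : ℝ := x - 1 with ha
  have key : ∀ y : ℝ, a < y →
      (∫ s : ℝ, k s * g (y - s))
        = (∫ s : ℝ, k s * g (a - s)) + ∫ t in a..y, Gc t := by
    intro y hay
    have hle : a ≤ y := hay.le
    rw [intervalIntegral.integral_of_le hle]
    have hswap : ∫ t in Set.Ioc a y, Gc t
        = ∫ s : ℝ, ∫ t in Set.Ioc a y, k s * g' (t - s) := by
      rw [hGc]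
      exact integral_integral_swap (conv_prod_integrable hk hg'c hC hg'b a y)
    have hinner : ∀ s : ℝ, ∫ t in Set.Ioc a y, k s * g' (t - s)
        = k s * (g (y - s) - g (a - s)) := by
      intro s
      rw [integral_const_mul]
      congr 1
      rw [← intervalIntegral.integral_of_le hle]
      have : ∫ t in a..y, g' (t - s) = ∫ t in (a - s)..(y - s), g' t :=
        intervalIntegral.integral_comp_sub_right (fun t => g' t) s
      rw [this]
      exact intervalIntegral.integral_eq_sub_of_hasDerivAt (fun t _ => hg t)
        (hg'c.intervalIntegrable _ _)
    have hsub : ∫ s : ℝ, k s * (g (y - s) - g (a - s))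
        = (∫ s : ℝ, k s * g (y - s)) - ∫ s : ℝ, k s * g (a - s) := by
      simp_rw [mul_sub]
      exact integral_sub (conv_integrand_integrable hk hgc hgb y)
        (conv_integrand_integrable hk hgc hgb a)
    have : ∫ t in Set.Ioc a y, Gc t
        = (∫ s : ℝ, k s * g (y - s)) - ∫ s : ℝ, k s * g (a - s) := by
      rw [hswap]
      simp_rw [hinner]
      exact hsub
    rw [this]
    ring
  have hF2 : HasDerivAt (fun y => (∫ s : ℝ, k s * g (a - s)) + ∫ t in a..y, Gc t) (Gc x) x := by
    have h := intervalIntegral.integral_hasDerivAt_right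
      (hGc_cont.intervalIntegrable a x)
      hGc_cont.stronglyMeasurable.stronglyMeasurableAtFilter
      hGc_cont.continuousAt
    exact h.const_add _
  have hev : (fun y => ∫ s : ℝ, k s * g (y - s))
      =ᶠ[nhds x] (fun y => (∫ s : ℝ, k s * g (a - s)) + ∫ t in a..y, Gc t) := by
    filter_upwards [Ioi_mem_nhds (show a < x by rw [ha]; linarith)] with y hy
    exact key y hy
  exact hev.hasDerivAt_iff.mpr hF2

/-! ### The functions `u_j = (d/dx + λ)^j u` -/

noncomputable def uaux (lam : ℝ) (u : ℝ → ℂ) (j : ℕ) : ℝ → ℂ :=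
  fun x => ∑ i ∈ Finset.range (j + 1),
    ((j.choose i : ℂ) * (lam : ℂ) ^ (j - i)) * iteratedDeriv i u x

lemma uaux_zero (lam : ℝ) (u : ℝ → ℂ) : uaux lam u 0 = u := by
  funext x
  simp [uaux]

section UAux

variable {lam : ℝ} {n : ℕ} {u : ℝ → ℂ}

lemma uaux_continuous (hu : ContDiff ℝ n u) {j : ℕ} (hj : j ≤ n) :
    Continuous (uaux lam u j) := by
  apply continuous_finset_sum
  intro i hi
  have hi' : i ≤ n := le_trans (Nat.lt_succ_iff.mp (Finset.mem_range.mp hi)) hj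
  exact continuous_const.mul (hu.continuous_iteratedDeriv i (by exact_mod_cast hi'))

lemma uaux_integrable (huL1 : ∀ j : ℕ, j ≤ n → Integrable (iteratedDeriv j u))
    {j : ℕ} (hj : j ≤ n) : Integrable (uaux lam u j) := by
  apply integrable_finset_sum
  intro i hi
  have hi' : i ≤ n := le_trans (Nat.lt_succ_iff.mp (Finset.mem_range.mp hi)) hj
  exact (huL1 i hi').const_mul _

lemma uaux_tendsto (huz : ∀ j : ℕ, j < n → Tendsto (iteratedDeriv j u) (cocompact ℝ) (nhds 0))
    {j : ℕ} (hj : j < n) : Tendsto (uaux lam u j) (cocompact ℝ) (nhds 0) := by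
  have h := tendsto_finset_sum (Finset.range (j + 1))
    (f := fun (i : ℕ) (x : ℝ) => ((j.choose i : ℂ) * (lam : ℂ) ^ (j - i)) * iteratedDeriv i u x)
    (fun i hi => by
      have hi' : i < n := lt_of_le_of_lt (Nat.lt_succ_iff.mp (Finset.mem_range.mp hi)) hj
      exact (huz i hi').const_mul _)
  unfold uaux
  simpa using h

lemma uaux_succ (lam : ℝ) (u : ℝ → ℂ) (j : ℕ) (x : ℝ) :
    uaux lam u (j + 1) x
      = (∑ i ∈ Finset.range (j + 1),
          ((j.choose i : ℂ) * (lam : ℂ) ^ (j - i)) * iteratedDeriv (i + 1) u x)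
        + (lam : ℂ) * uaux lam u j x := by
  have e1 : uaux lam u (j + 1) x
      = (∑ i ∈ Finset.range (j + 1),
          (((j + 1).choose (i + 1) : ℂ) * (lam : ℂ) ^ (j - i)) * iteratedDeriv (i + 1) u x)
        + (lam : ℂ) ^ (j + 1) * iteratedDeriv 0 u x := by
    rw [uaux, Finset.sum_range_succ']
    congr 1
    · refine Finset.sum_congr rfl (fun i _ => ?_)
      rw [Nat.succ_sub_succ]
    · simp
  have e2 : (lam : ℂ) * uaux lam u j x
      = (∑ i ∈ Finset.range j,
          ((j.choose (i + 1) : ℂ) * (lam : ℂ) ^ (j - i)) * iteratedDeriv (i + 1) u x)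
        + (lam : ℂ) ^ (j + 1) * iteratedDeriv 0 u x := by
    rw [uaux, Finset.mul_sum, Finset.sum_range_succ']
    congr 1
    · refine Finset.sum_congr rfl (fun i hi => ?_)
      have hij : i + 1 ≤ j := Finset.mem_range.mp hi
      rw [show j - i = (j - (i + 1)) + 1 by omega, pow_succ]
      ring
    · simp [pow_succ]
      ring
  have e3 : ∑ i ∈ Finset.range (j + 1),
        (((j + 1).choose (i + 1) : ℂ) * (lam : ℂ) ^ (j - i)) * iteratedDeriv (i + 1) u x
      = (∑ i ∈ Finset.range (j + 1),
          ((j.choose i : ℂ) * (lam : ℂ) ^ (j - i)) * iteratedDeriv (i + 1) u x)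
        + ∑ i ∈ Finset.range j,
          ((j.choose (i + 1) : ℂ) * (lam : ℂ) ^ (j - i)) * iteratedDeriv (i + 1) u x := by
    have hsplit : ∀ i ∈ Finset.range (j + 1),
        (((j + 1).choose (i + 1) : ℂ) * (lam : ℂ) ^ (j - i)) * iteratedDeriv (i + 1) u x
          = ((j.choose i : ℂ) * (lam : ℂ) ^ (j - i)) * iteratedDeriv (i + 1) u x
            + ((j.choose (i + 1) : ℂ) * (lam : ℂ) ^ (j - i)) * iteratedDeriv (i + 1) u x := by
      intro i _
      rw [Nat.choose_succ_succ]
      push_cast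
      ring
    rw [Finset.sum_congr rfl hsplit, Finset.sum_add_distrib]
    congr 1
    rw [Finset.sum_range_succ]
    simp [Nat.choose_succ_self]
  rw [e1, e3, e2]
  ring

lemma uaux_hasDerivAt (hu : ContDiff ℝ n u) {j : ℕ} (hj : j < n) (x : ℝ) :
    HasDerivAt (uaux lam u j)
      (uaux lam u (j + 1) x - (lam : ℂ) * uaux lam u j x) x := by
  have h1 : HasDerivAt (fun y => ∑ i ∈ Finset.range (j + 1),
      ((j.choose i : ℂ) * (lam : ℂ) ^ (j - i)) * iteratedDeriv i u y)
      (∑ i ∈ Finset.range (j + 1),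
        ((j.choose i : ℂ) * (lam : ℂ) ^ (j - i)) * iteratedDeriv (i + 1) u x) x := by
    apply HasDerivAt.fun_sum
    intro i hi
    have hi' : i < n := lt_of_le_of_lt (Nat.lt_succ_iff.mp (Finset.mem_range.mp hi)) hj
    have hdiff : Differentiable ℝ (iteratedDeriv i u) :=
      hu.differentiable_iteratedDeriv i (by exact_mod_cast hi')
    have hder : HasDerivAt (iteratedDeriv i u) (iteratedDeriv (i + 1) u x) x := by
      rw [iteratedDeriv_succ]
      exact (hdiff x).hasDerivAt
    exact hder.const_mul _
  have : uaux lam u (j + 1) x - (lam : ℂ) * uaux lam u j x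
      = ∑ i ∈ Finset.range (j + 1),
        ((j.choose i : ℂ) * (lam : ℂ) ^ (j - i)) * iteratedDeriv (i + 1) u x := by
    rw [uaux_succ]
    ring
  rw [this]
  exact h1

end UAux

/-! ### Bounds from decay -/

lemma exists_bound_of_tendsto {f : ℝ → ℂ} (hc : Continuous f)
    (h0 : Tendsto f (cocompact ℝ) (nhds 0)) : ∃ C, 0 ≤ C ∧ ∀ x, ‖f x‖ ≤ C := by
  have h1 : ∀ᶠ x in cocompact ℝ, ‖f x‖ ≤ 1 := by
    have := Metric.tendsto_nhds.mp h0 1 one_pos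
    filter_upwards [this] with x hx
    rw [dist_eq_norm, sub_zero] at hx
    exact hx.le
  obtain ⟨K, hK, hKs⟩ := mem_cocompact.mp h1
  obtain ⟨C, hC⟩ := hK.exists_bound_of_continuousOn hc.continuousOn
  refine ⟨max (max C 1) 0, le_max_right _ _, fun x => ?_⟩
  by_cases hx : x ∈ K
  · exact le_trans (hC x hx) (le_trans (le_max_left C 1) (le_max_left _ _))
  · have : ‖f x‖ ≤ 1 := hKs hx
    exact le_trans this (le_trans (le_max_right C 1) (le_max_left _ _))

/-! ### Fourier transform of a convolution -/

lemma fourierT_conv {k g : ℝ → ℂ} (hk : Integrable k) (hg : Integrable g) (ω : ℝ) :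
    fourierT (fun x => ∫ s : ℝ, k s * g (x - s)) ω
      = (∫ s : ℝ, Complex.exp (-(Complex.I * ω * s)) * k s) * fourierT g ω := by
  have hbase : Integrable (fun p : ℝ × ℝ => k p.2 * g (p.1 - p.2))
      ((volume : Measure ℝ).prod volume) :=
    hk.convolution_integrand (ContinuousLinearMap.mul ℂ ℂ) hg
  have hprod : Integrable
      (fun p : ℝ × ℝ => Complex.exp (-(Complex.I * ω * p.1)) * (k p.2 * g (p.1 - p.2)))
      ((volume : Measure ℝ).prod volume) := by
    apply hbase.bdd_mul
    · exact ((expChar_continuous ω).comp continuous_fst).aestronglyMeasurable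
    · exact ae_of_all _ (fun p => le_of_eq (expChar_norm ω p.1))
  calc fourierT (fun x => ∫ s : ℝ, k s * g (x - s)) ω
      = ∫ x : ℝ, ∫ s : ℝ, Complex.exp (-(Complex.I * ω * x)) * (k s * g (x - s)) := by
        unfold fourierT
        congr 1; funext x
        rw [integral_const_mul]
    _ = ∫ s : ℝ, ∫ x : ℝ, Complex.exp (-(Complex.I * ω * x)) * (k s * g (x - s)) :=
        integral_integral_swap hprod
    _ = ∫ s : ℝ, (Complex.exp (-(Complex.I * ω * s)) * k s) * fourierT g ω := by
        congr 1; funext s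
        have hpt : ∀ x : ℝ, Complex.exp (-(Complex.I * ω * x)) * (k s * g (x - s))
            = (Complex.exp (-(Complex.I * ω * s)) * k s)
              * (Complex.exp (-(Complex.I * ω * ((x - s : ℝ) : ℝ))) * g (x - s)) := by
          intro x
          rw [show (-(Complex.I * ω * x) : ℂ)
              = -(Complex.I * ω * s) + -(Complex.I * ω * ((x - s : ℝ) : ℝ)) by push_cast; ring,
            Complex.exp_add]
          ring
        simp_rw [hpt]
        rw [integral_const_mul]
        congr 1
        exact integral_sub_right_eq_self
          (fun x : ℝ => Complex.exp (-(Complex.I * ω * x)) * g x) s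
    _ = (∫ s : ℝ, Complex.exp (-(Complex.I * ω * s)) * k s) * fourierT g ω := by
        rw [← integral_mul_const]

end TFDaux

open TFDaux Complex Set

theorem fourier_leftTemperedDerivative (lam : ℝ) (hlam : 0 < lam) (n : ℕ) (hn : 0 < n)
    (α : ℝ) (hα₁ : (n : ℝ) - 1 < α) (hα₂ : α < n) (u : ℝ → ℂ)
    (hu : ContDiff ℝ n u)
    (huL1 : ∀ j : ℕ, j ≤ n → Integrable (iteratedDeriv j u))
    (huz : ∀ j : ℕ, j < n → Tendsto (iteratedDeriv j u) (cocompact ℝ) (nhds 0))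
    (hG : ContDiff ℝ n (leftFracG lam n α u))
    (hD : Integrable (leftTD lam n α u)) :
    ∀ ω : ℝ, fourierT (leftTD lam n α u) ω =
      ((lam : ℂ) + Complex.I * ω) ^ (α : ℂ) * fourierT u ω := by
  intro ω
  set β : ℝ := (n : ℝ) - α with hβdef
  have hβ0 : 0 < β := by rw [hβdef]; linarith
  have hk := kfun_integrable hβ0 hlam
  -- the iterated derivatives of G as convolutions
  have hGj : ∀ j : ℕ, j + 1 ≤ n → ∀ x : ℝ,
      iteratedDeriv j (leftFracG lam n α u) x
        = (Real.exp (lam * x) : ℂ) * ∫ s : ℝ, kfun lam β s * uaux lam u j (x - s) := by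
    intro j
    induction j with
    | zero =>
      intro _ x
      rw [iteratedDeriv_zero, uaux_zero, G_eq_conv]
    | succ j IH =>
      intro hj x
      have hj1 : j + 1 ≤ n := by omega
      have hjn : j < n := by omega
      have hj1n : j + 1 < n := by omega
      have IH' := IH hj1
      -- bounds
      obtain ⟨Cg, hCg0, hCg⟩ := exists_bound_of_tendsto
        (uaux_continuous hu (le_of_lt hjn)) (uaux_tendsto huz hjn)
      set d : ℝ → ℂ := fun y => uaux lam u (j + 1) y - (lam : ℂ) * uaux lam u j y with hd
      have hder : ∀ y, HasDerivAt (uaux lam u j) (d y) y :=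
        fun y => uaux_hasDerivAt hu hjn y
      have hdc : Continuous d :=
        (uaux_continuous hu (by omega)).sub (continuous_const.mul (uaux_continuous hu hjn.le))
      have hdt : Tendsto d (cocompact ℝ) (nhds 0) := by
        have h1 := uaux_tendsto (lam := lam) huz hj1n
        have h2 := (uaux_tendsto (lam := lam) huz hjn).const_mul ((lam : ℂ))
        have := h1.sub h2
        simpa using this
      obtain ⟨Cd, hCd0, hCd⟩ := exists_bound_of_tendsto hdc hdt
      have hconv := hasDerivAt_conv hk hder (uaux_continuous hu hjn.le) hCg0 hCg hdc hCd0 hCd x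
      -- product rule
      have hexpR : HasDerivAt (fun y : ℝ => Real.exp (lam * y)) (Real.exp (lam * x) * lam) x := by
        have h0 : HasDerivAt (fun y : ℝ => lam * y) lam x := by
          simpa using (hasDerivAt_id x).const_mul lam
        exact (Real.hasDerivAt_exp (lam * x)).comp x h0
      have hexp : HasDerivAt (fun y : ℝ => ((Real.exp (lam * y) : ℝ) : ℂ))
          (((Real.exp (lam * x) * lam : ℝ) : ℂ)) x := hexpR.ofReal_comp
      have hmul := hexp.fun_mul hconv
      have hDn : iteratedDeriv (j + 1) (leftFracG lam n α u) x
          = deriv (fun y => ((Real.exp (lam * y) : ℝ) : ℂ)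
              * ∫ s : ℝ, kfun lam β s * uaux lam u j (y - s)) x := by
        rw [iteratedDeriv_succ]
        congr 1
        funext y
        exact IH' y
      rw [hDn, hmul.deriv]
      -- compute the resulting expression
      have hsplit : ∫ s : ℝ, kfun lam β s * d (x - s)
          = (∫ s : ℝ, kfun lam β s * uaux lam u (j + 1) (x - s))
            - (lam : ℂ) * ∫ s : ℝ, kfun lam β s * uaux lam u j (x - s) := by
        obtain ⟨C1, _, hC1⟩ := exists_bound_of_tendsto
          (uaux_continuous hu (by omega : j + 1 ≤ n)) (uaux_tendsto huz hj1n)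
        have hint1 : Integrable (fun s => kfun lam β s * uaux lam u (j + 1) (x - s)) :=
          conv_integrand_integrable hk (uaux_continuous hu (by omega)) hC1 x
        have hint2 : Integrable (fun s => kfun lam β s * uaux lam u j (x - s)) :=
          conv_integrand_integrable hk (uaux_continuous hu hjn.le) hCg x
        have : (fun s : ℝ => kfun lam β s * d (x - s))
            = fun s => kfun lam β s * uaux lam u (j + 1) (x - s)
              - (lam : ℂ) * (kfun lam β s * uaux lam u j (x - s)) := by
          funext s
          rw [hd]
          ring
        rw [this, integral_sub hint1 (hint2.const_mul _), integral_const_mul]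
      rw [hsplit]
      push_cast
      ring
  -- main assembly
  set z : ℂ := (lam : ℂ) + Complex.I * ω with hz
  have hz0 : z ≠ 0 := by
    intro h
    have : z.re = 0 := by rw [h]; simp
    rw [hz] at this
    simp [Complex.add_re, Complex.mul_re] at this
    linarith
  set m : ℕ := n - 1 with hm
  have hmn : m + 1 = n := Nat.succ_pred_eq_of_pos hn
  have hmltn : m < n := by omega
  set f : ℝ → ℂ := fun x => ∫ s : ℝ, kfun lam β s * uaux lam u m (x - s) with hf
  have hGm : ∀ x, iteratedDeriv m (leftFracG lam n α u) x
      = (Real.exp (lam * x) : ℂ) * f x := hGj m (by omega)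
  have hfdiff : Differentiable ℝ f := by
    have h1 : Differentiable ℝ (iteratedDeriv m (leftFracG lam n α u)) :=
      hG.differentiable_iteratedDeriv m (by exact_mod_cast hmltn)
    have hfe : f = fun x => ((Real.exp (-(lam * x)) : ℝ) : ℂ)
        * iteratedDeriv m (leftFracG lam n α u) x := by
      funext x
      rw [hGm x, ← mul_assoc, ← Complex.ofReal_mul, ← Real.exp_add]
      simp
    rw [hfe]
    have hed : Differentiable ℝ (fun x : ℝ => ((Real.exp (-(lam * x)) : ℝ) : ℂ)) := by
      apply Complex.ofRealCLM.differentiable.comp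
      exact Real.differentiable_exp.comp ((differentiable_id.const_mul lam).neg)
    exact hed.mul h1
  have hTD : ∀ x, leftTD lam n α u x = deriv f x + (lam : ℂ) * f x := by
    intro x
    have hexpR : HasDerivAt (fun y : ℝ => Real.exp (lam * y)) (Real.exp (lam * x) * lam) x := by
      have h0 : HasDerivAt (fun y : ℝ => lam * y) lam x := by
        simpa using (hasDerivAt_id x).const_mul lam
      exact (Real.hasDerivAt_exp (lam * x)).comp x h0
    have hexp : HasDerivAt (fun y : ℝ => ((Real.exp (lam * y) : ℝ) : ℂ))
        (((Real.exp (lam * x) * lam : ℝ) : ℂ)) x := hexpR.ofReal_comp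
    have hmul := hexp.fun_mul ((hfdiff x).hasDerivAt)
    have hsucc : ∀ F : ℝ → ℂ, iteratedDeriv n F = deriv (iteratedDeriv m F) := by
      intro F
      rw [← hmn, iteratedDeriv_succ]
    have hDn : iteratedDeriv n (leftFracG lam n α u) x
        = deriv (fun y => ((Real.exp (lam * y) : ℝ) : ℂ) * f y) x := by
      rw [hsucc]
      congr 1
      funext y
      exact hGm y
    rw [leftTD, hDn, hmul.deriv, Complex.real_smul]
    push_cast
    have hee : Complex.exp (-((lam:ℂ) * x)) * Complex.exp ((lam:ℂ) * x) = 1 := by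
      rw [← Complex.exp_add]
      simp
    calc Complex.exp (-((lam:ℂ) * x))
          * (Complex.exp ((lam:ℂ) * x) * (lam:ℂ) * f x
            + Complex.exp ((lam:ℂ) * x) * deriv f x)
        = (Complex.exp (-((lam:ℂ) * x)) * Complex.exp ((lam:ℂ) * x))
            * ((lam:ℂ) * f x + deriv f x) := by ring
      _ = deriv f x + (lam:ℂ) * f x := by rw [hee]; ring
  have hfInt : Integrable f := by
    have h1 : Integrable (convolution (kfun lam β) (uaux lam u m)
        (ContinuousLinearMap.mul ℂ ℂ) volume) :=
      hk.integrable_convolution _ (uaux_integrable (lam := lam) huL1 (le_of_lt hmltn))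
    exact h1
  have hderivInt : Integrable (deriv f) := by
    have hde : deriv f = fun x => leftTD lam n α u x - (lam : ℂ) * f x := by
      funext x
      rw [hTD x]
      ring
    rw [hde]
    exact hD.sub (hfInt.const_mul _)
  -- Fourier transform of uaux
  have hFu : ∀ j : ℕ, j + 1 ≤ n →
      fourierT (uaux lam u j) ω = z ^ j * fourierT u ω := by
    intro j
    induction j with
    | zero =>
      intro _
      rw [uaux_zero]
      simp
    | succ j IH =>
      intro hj
      have hjn : j < n := by omega
      have hder : ∀ y, HasDerivAt (uaux lam u j)
          (uaux lam u (j + 1) y - (lam : ℂ) * uaux lam u j y) y :=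
        fun y => uaux_hasDerivAt hu hjn y
      have hderiv_eq : deriv (uaux lam u j)
          = fun y => uaux lam u (j + 1) y - (lam : ℂ) * uaux lam u j y :=
        funext fun y => (hder y).deriv
      have hint_j : Integrable (uaux lam u j) := uaux_integrable huL1 hjn.le
      have hint_j1 : Integrable (uaux lam u (j + 1)) := uaux_integrable huL1 (by omega)
      have hdiff : Differentiable ℝ (uaux lam u j) := fun y => (hder y).differentiableAt
      have hint_d : Integrable (deriv (uaux lam u j)) := by
        rw [hderiv_eq]
        exact hint_j1.sub (hint_j.const_mul _)
      have h1 := fourierT_deriv hint_j hdiff hint_d ω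
      have h2 : fourierT (uaux lam u (j + 1)) ω
          = fourierT (fun y => deriv (uaux lam u j) y + (lam : ℂ) * uaux lam u j y) ω := by
        congr 1
        funext y
        rw [hderiv_eq]
        ring
      rw [h2, fourierT_add hint_d (hint_j.const_mul _) ω, fourierT_const_mul, h1,
        IH (by omega)]
      rw [hz]
      ring
  -- final computation
  have e1 : fourierT (leftTD lam n α u) ω
      = fourierT (fun x => deriv f x + (lam : ℂ) * f x) ω := by
    congr 1
    funext x
    exact hTD x
  rw [e1, fourierT_add hderivInt (hfInt.const_mul _) ω, fourierT_const_mul,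
    fourierT_deriv hfInt hfdiff hderivInt ω]
  have e2 : fourierT f ω = z ^ (-(β : ℂ)) * (z ^ m * fourierT u ω) := by
    have hconv := fourierT_conv hk (uaux_integrable (lam := lam) huL1 (le_of_lt hmltn)) ω
    rw [hf, hconv, fourier_kfun hlam hβ0 ω, hFu m (by omega), ← hz]
  rw [e2]
  have hmc : ((m : ℕ) : ℂ) + 1 = (n : ℂ) := by
    have h' : ((m + 1 : ℕ) : ℂ) = (n : ℂ) := by exact_mod_cast congrArg (Nat.cast : ℕ → ℂ) hmn
    push_cast at h'
    exact h'
  have key : z ^ (m : ℕ) * z * z ^ (-(β : ℂ)) = z ^ (α : ℂ) := by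
    have h1 : ((α : ℂ)) = (((m : ℕ) : ℂ) + 1) + -(β : ℂ) := by
      rw [hmc, hβdef]
      push_cast
      ring
    rw [h1, Complex.cpow_add _ _ hz0, Complex.cpow_add _ _ hz0, Complex.cpow_one,
      Complex.cpow_natCast]
  have hstep : Complex.I * ω * (z ^ (-(β : ℂ)) * (z ^ m * fourierT u ω))
      + (lam : ℂ) * (z ^ (-(β : ℂ)) * (z ^ m * fourierT u ω))
      = (z ^ (m : ℕ) * z * z ^ (-(β : ℂ))) * fourierT u ω := by
    rw [hz]
    ring
  rw [hstep, key]
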